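/- Let R be a commutative ring, let e and m be positive integers with e dividing m, and let ξ ∈ R. Then in the quotient ring R[q]/(Φ_e(q)) one has the equality ∏_{j=0}^{m−1} (1 − q^j·ξ) = (1 − ξ^e)^{m/e}, where q denotes the image of the polynomial variable. -/

import Mathlib

open Polynomial Finset

-- Lemma 1: in a field with a primitive e-th root of unity ζ,
-- ∏_{j<e} (1 - ζ^j t) = 1 - t^e.
lemma aux_field {K : Type*} [Field K] {e : ℕ} (he : 0 < e) {ζ : K}
    (hζ : IsPrimitiveRoot ζ e) (t : K) :
    ∏ j ∈ range e, (1 - ζ ^ j * t) = 1 - t ^ e := by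
  rcases eq_or_ne t 0 with rfl | ht
  · simp [zero_pow he.ne']
  have hprod : ∀ x : K, ∏ j ∈ range e, (x - ζ ^ j) = x ^ e - 1 := by
    intro x
    have h := X_pow_sub_C_eq_prod hζ he (one_pow e)
    apply_fun eval x at h
    simpa [eval_prod] using h.symm
  calc ∏ j ∈ range e, (1 - ζ ^ j * t) = ∏ j ∈ range e, (t * (t⁻¹ - ζ ^ j)) := by
        refine prod_congr rfl fun j _ => ?_
        field_simp
    _ = t ^ e * ((t⁻¹) ^ e - 1) := by
        rw [prod_mul_distrib, prod_const, card_range, hprod]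
    _ = 1 - t ^ e := by
        rw [inv_pow, mul_sub, mul_inv_cancel₀ (pow_ne_zero _ ht), mul_one]

-- Lemma 2: over such a field, cyclotomic e divides the difference.
lemma aux_dvd_field {K : Type*} [Field K] {e : ℕ} (he : 0 < e) {ζ : K}
    (hζ : IsPrimitiveRoot ζ e) (t : K) :
    cyclotomic e K ∣ ∏ j ∈ range e, (1 - X ^ j * C t) - C (1 - t ^ e) := by
  set D : K[X] := ∏ j ∈ range e, (1 - X ^ j * C t) - C (1 - t ^ e) with hD
  rcases eq_or_ne D 0 with h0 | h0
  · simp [h0]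
  rw [cyclotomic_eq_prod_X_sub_primitiveRoots hζ]
  have heq : ∏ μ ∈ primitiveRoots e K, (X - C μ)
      = (Multiset.map (fun a => X - C a) (primitiveRoots e K).val).prod := rfl
  rw [heq, Multiset.prod_X_sub_C_dvd_iff_le_roots h0]
  rw [Multiset.le_iff_subset (primitiveRoots e K).nodup]
  intro μ hμ
  have hμ' : IsPrimitiveRoot μ e := (mem_primitiveRoots he).mp hμ
  rw [mem_roots h0]
  have : eval μ D = 0 := by
    rw [hD]
    simp only [eval_sub, eval_prod, eval_sub, eval_one, eval_mul, eval_pow, eval_X, eval_C]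
    rw [aux_field he hμ' t, sub_self]
  exact this

-- Lemma 3/4: general commutative ring.
lemma aux_dvd {R : Type*} [CommRing R] {e : ℕ} (he : 0 < e) (ξ : R) :
    cyclotomic e R ∣ ∏ j ∈ range e, (1 - X ^ j * C ξ) - C (1 - ξ ^ e) := by
  have key : cyclotomic e (Polynomial ℤ) ∣
      ∏ j ∈ range e, (1 - X ^ j * C (X : Polynomial ℤ)) - C (1 - (X : Polynomial ℤ) ^ e) := by
    let F := FractionRing (Polynomial ℤ)
    let K := AlgebraicClosure F
    haveI : CharZero F := charZero_of_injective_algebraMap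
      (IsFractionRing.injective (Polynomial ℤ) F)
    haveI : CharZero K := charZero_of_injective_algebraMap (algebraMap F K).injective
    haveI : NeZero ((e : K)) := ⟨Nat.cast_ne_zero.mpr he.ne'⟩
    obtain ⟨ζ, hζ⟩ := HasEnoughRootsOfUnity.exists_primitiveRoot K e
    let φ : Polynomial ℤ →+* K :=
      (algebraMap F K).comp (algebraMap (Polynomial ℤ) F)
    have hinj : Function.Injective φ :=
      (algebraMap F K).injective.comp (IsFractionRing.injective (Polynomial ℤ) F)
    rw [← map_dvd_map φ hinj (cyclotomic.monic e _), map_cyclotomic]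
    have hmap : Polynomial.map φ
        (∏ j ∈ range e, (1 - X ^ j * C (X : Polynomial ℤ)) - C (1 - (X : Polynomial ℤ) ^ e))
        = ∏ j ∈ range e, (1 - X ^ j * C (φ X)) - C (1 - (φ X) ^ e) := by
      simp [Polynomial.map_prod, Polynomial.map_sub, Polynomial.map_one, Polynomial.map_mul,
        Polynomial.map_pow, Polynomial.map_X, Polynomial.map_C]
    rw [hmap]
    exact aux_dvd_field he hζ (φ X)
  let ρ : Polynomial ℤ →+* R := eval₂RingHom (Int.castRingHom R) ξ
  have h2 := Polynomial.map_dvd ρ key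
  rw [map_cyclotomic] at h2
  have hρX : ρ X = ξ := by simp [ρ]
  have hmap : Polynomial.map ρ
      (∏ j ∈ range e, (1 - X ^ j * C (X : Polynomial ℤ)) - C (1 - (X : Polynomial ℤ) ^ e))
      = ∏ j ∈ range e, (1 - X ^ j * C ξ) - C (1 - ξ ^ e) := by
    simp [Polynomial.map_prod, Polynomial.map_sub, Polynomial.map_one, Polynomial.map_mul,
      Polynomial.map_pow, Polynomial.map_X, Polynomial.map_C, hρX]
  rwa [hmap] at h2

-- Lemma 5: product over a multiple of e.
lemma aux_prod {A : Type*} [CommRing A] (a b c : A) (e : ℕ) (ha : a ^ e = 1)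
    (hc : ∏ r ∈ range e, (1 - a ^ r * b) = c) (k : ℕ) :
    ∏ j ∈ range (e * k), (1 - a ^ j * b) = c ^ k := by
  induction k with
  | zero => simp
  | succ k ih =>
    rw [Nat.mul_succ, prod_range_add, ih, pow_succ]
    congr 1
    rw [← hc]
    refine prod_congr rfl fun i _ => ?_
    rw [pow_add, pow_mul, ha, one_pow, one_mul]

/-- Let `R` be a commutative ring, `e ∣ m` positive integers and `ξ ∈ R`. Then in
`R[q]/(Φ_e(q))` one has `∏_{j=0}^{m−1} (1 − q^j·ξ) = (1 − ξ^e)^{m/e}`. -/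
theorem prod_one_sub_qpow_mul (R : Type*) [CommRing R] (e m : ℕ) (he : 0 < e)
    (hm : 0 < m) (hem : e ∣ m) (ξ : R) :
    Ideal.Quotient.mk (Ideal.span {cyclotomic e R})
        (∏ j ∈ range m, (1 - X ^ j * C ξ)) =
      Ideal.Quotient.mk (Ideal.span {cyclotomic e R}) ((1 - C (ξ ^ e)) ^ (m / e)) := by
  obtain ⟨k, rfl⟩ := hem
  rw [Nat.mul_div_cancel_left k he]
  set mk := Ideal.Quotient.mk (Ideal.span {cyclotomic e R}) with hmk
  have hmem : ∀ p : R[X], cyclotomic e R ∣ p → mk p = 0 := by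
    intro p hp
    rw [hmk, Ideal.Quotient.eq_zero_iff_mem]
    exact Ideal.mem_span_singleton.mpr hp
  have ha : (mk X) ^ e = 1 := by
    have : mk (X ^ e - 1) = 0 := hmem _ (cyclotomic.dvd_X_pow_sub_one e R)
    rw [map_sub, map_pow, map_one, sub_eq_zero] at this
    exact this
  have hc : ∏ r ∈ range e, (1 - (mk X) ^ r * mk (C ξ)) = mk (C (1 - ξ ^ e)) := by
    have : mk (∏ j ∈ range e, (1 - X ^ j * C ξ) - C (1 - ξ ^ e)) = 0 := hmem _ (aux_dvd he ξ)
    rw [map_sub, sub_eq_zero, map_prod] at this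
    rw [← this]
    exact prod_congr rfl fun r _ => by
      simp only [map_sub, map_one, map_mul, map_pow]
  have := aux_prod (mk X) (mk (C ξ)) (mk (C (1 - ξ ^ e))) e ha hc k
  calc mk (∏ j ∈ range (e * k), (1 - X ^ j * C ξ))
      = ∏ j ∈ range (e * k), (1 - (mk X) ^ j * mk (C ξ)) := by
        rw [map_prod]; exact prod_congr rfl fun j _ => by
          simp only [map_sub, map_one, map_mul, map_pow]
    _ = (mk (C (1 - ξ ^ e))) ^ k := this
    _ = mk ((1 - C (ξ ^ e)) ^ k) := by rw [map_pow]; congr 1; simp [map_sub, map_one]
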